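/- For a node v that is a dangling node (no outgoing arcs) in a graph G, adding a self-loop to v multiplies its PageRank score (as defined by the influence series without dangling-node preprocessing) by exactly 1/(1-α). -/

import Mathlib

open scoped Classical BigOperators

/-- Out-degree of `z` in the directed graph with arc relation `A`. -/
noncomputable def outDeg {V : Type*} [Fintype V] (A : V → V → Prop) (z : V) : ℕ :=
  (Finset.univ.filter fun w => A z w).card

/-- Random-surfer one-step transition matrix (rows of dangling nodes are zero). -/
noncomputable def stepM {V : Type*} [Fintype V] (A : V → V → Prop) : Matrix V V ℝ :=
  fun z w => if A z w then 1 / (outDeg A z : ℝ) else 0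

/-- PageRank contribution of `z` to `v`:
`P(z,v) = (1-α)/n · Σ_τ α^τ · inf_τ(z,v)` where `inf_τ(z,v) = (M^τ) z v`. -/
noncomputable def contrib {V : Type*} [Fintype V] (α : ℝ) (A : V → V → Prop) (z v : V) : ℝ :=
  (1 - α) / (Fintype.card V : ℝ) * ∑' τ : ℕ, α ^ τ * (stepM A ^ τ) z v

/-- PageRank score of `v` with damping factor `α`. -/
noncomputable def pagerank {V : Type*} [Fintype V] (α : ℝ) (A : V → V → Prop) (v : V) : ℝ :=
  (1 - α) / (Fintype.card V : ℝ) * ∑' τ : ℕ, α ^ τ * ∑ z, (stepM A ^ τ) z v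

section aux

variable {V : Type*} [Fintype V] (A : V → V → Prop)

lemma stepM_nonneg (z w : V) : 0 ≤ stepM A z w := by
  unfold stepM; split <;> positivity

lemma stepM_rowsum_le_one (z : V) : ∑ w, stepM A z w ≤ 1 := by
  have hcard : ∑ w, stepM A z w = (outDeg A z : ℝ) * (1 / (outDeg A z : ℝ)) := by
    unfold stepM
    rw [Finset.sum_ite, Finset.sum_const, Finset.sum_const, smul_zero, add_zero,
      nsmul_eq_mul]
    norm_num [outDeg]
  rw [hcard]
  rcases Nat.eq_zero_or_pos (outDeg A z) with h | h
  · simp [h]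
  · rw [mul_one_div, div_self (by positivity)]

lemma stepM_pow_nonneg (k : ℕ) (z w : V) : 0 ≤ (stepM A ^ k) z w := by
  induction k generalizing z w with
  | zero => rw [pow_zero, Matrix.one_apply]; split <;> norm_num
  | succ n ih =>
      rw [pow_succ', Matrix.mul_apply]
      exact Finset.sum_nonneg fun x _ => mul_nonneg (stepM_nonneg A z x) (ih x w)

lemma stepM_pow_le_one (k : ℕ) (z w : V) : (stepM A ^ k) z w ≤ 1 := by
  induction k generalizing z w with
  | zero => rw [pow_zero, Matrix.one_apply]; split <;> norm_num
  | succ n ih =>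
      rw [pow_succ', Matrix.mul_apply]
      calc ∑ x, stepM A z x * (stepM A ^ n) x w
          ≤ ∑ x, stepM A z x * 1 := by
            refine Finset.sum_le_sum fun x _ => ?_
            exact mul_le_mul_of_nonneg_left (ih x w) (stepM_nonneg A z x)
        _ ≤ 1 := by simpa using stepM_rowsum_le_one A z

end aux

theorem stmt_6 {V : Type*} [Fintype V] (α : ℝ) (hα : α ∈ Set.Ioo (0:ℝ) 1)
    (A : V → V → Prop) (v : V) (hdangling : outDeg A v = 0) :
    pagerank α (fun x y => A x y ∨ (x = v ∧ y = v)) v = (1 / (1 - α)) * pagerank α A v := by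
  obtain ⟨hα0, hα1⟩ := hα
  set A' : V → V → Prop := fun x y => A x y ∨ (x = v ∧ y = v) with hA'
  set M : Matrix V V ℝ := stepM A with hM
  set E : Matrix V V ℝ := fun z w => if z = v ∧ w = v then 1 else 0 with hE
  -- v has no outgoing A-arcs
  have hnoarc : ∀ w, ¬ A v w := by
    intro w hw
    have : (Finset.univ.filter fun w => A v w).Nonempty := ⟨w, by simp [hw]⟩
    have := Finset.card_pos.mpr this
    rw [show (Finset.univ.filter fun w => A v w).card = outDeg A v from rfl, hdangling] at this
    exact absurd this (by norm_num)
  have hrowv : ∀ w, M v w = 0 := by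
    intro w; simp [hM, stepM, hnoarc w]
  -- out-degrees
  have houtdeg : ∀ z, z ≠ v → outDeg A' z = outDeg A z := by
    intro z hz
    unfold outDeg
    congr 1
    ext w
    simp [hA', hz]
  have houtdegv : outDeg A' v = 1 := by
    have h1 : outDeg A' v = ({v} : Finset V).card := by
      unfold outDeg
      congr 1
      ext w
      simp [hA', hnoarc w, eq_comm]
    rw [h1, Finset.card_singleton]
  -- stepM decomposition
  have hstep : stepM A' = M + E := by
    funext z w
    rw [Matrix.add_apply]
    by_cases hz : z = v
    · rw [hz, hrowv w, zero_add]
      have hE' : E v w = if w = v then 1 else 0 := by simp [hE]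
      rw [hE']
      simp only [stepM, houtdegv]
      by_cases hw : w = v
      · simp [hA', hw]
      · simp [hA', hw, hnoarc w]
    · have hE' : E z w = 0 := by simp [hE, hz]
      rw [hE', add_zero]
      have hiff : A' z w ↔ A z w := by simp [hA', hz]
      simp only [stepM, houtdeg z hz, hM, hiff]
  -- E * M = 0, E * E = E, X * E column
  have hEM : E * M = 0 := by
    funext z w
    simp only [Matrix.mul_apply, Matrix.zero_apply]
    simp only [hE]
    apply Finset.sum_eq_zero
    intro x _
    by_cases h : z = v ∧ x = v
    · rw [h.2, hrowv w, mul_zero]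
    · simp [h]
  have hEE : E * E = E := by
    funext z w
    simp only [Matrix.mul_apply]
    simp only [hE]
    rw [Finset.sum_eq_single v]
    · by_cases hz : z = v <;> by_cases hw : w = v <;> simp [hz, hw]
    · intro x _ hx; simp [hx]
    · simp
  have hXE : ∀ (X : Matrix V V ℝ) z, (X * E) z v = X z v := by
    intro X z
    simp only [Matrix.mul_apply]
    simp only [hE]
    rw [Finset.sum_eq_single v]
    · simp
    · intro x _ hx; simp [hx]
    · simp
  -- power formula
  have hpow : ∀ τ : ℕ, (M + E) ^ τ = M ^ τ + (∑ s ∈ Finset.range τ, M ^ s) * E := by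
    intro τ
    induction τ with
    | zero => simp
    | succ n ih =>
        have h1 : (∑ s ∈ Finset.range n, M ^ s) * E * M = 0 := by
          rw [mul_assoc, hEM, mul_zero]
        have h2 : (∑ s ∈ Finset.range n, M ^ s) * E * E
            = (∑ s ∈ Finset.range n, M ^ s) * E := by
          rw [mul_assoc, hEE]
        rw [pow_succ, ih, add_mul, mul_add, mul_add, h1, h2, ← pow_succ,
          Finset.sum_range_succ, add_mul]
        abel
  have hcol : ∀ (τ : ℕ) (z : V), ((M + E) ^ τ) z v = ∑ s ∈ Finset.range (τ + 1), (M ^ s) z v := by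
    intro τ z
    rw [hpow τ, Matrix.add_apply, hXE, Finset.sum_range_succ, Matrix.sum_apply, add_comm]
  -- summability facts
  set b : ℕ → ℝ := fun s => ∑ z, (M ^ s) z v with hb
  have hb0 : ∀ s, 0 ≤ b s := fun s =>
    Finset.sum_nonneg fun z _ => stepM_pow_nonneg A s z v
  have hbn : ∀ s, b s ≤ (Fintype.card V : ℝ) := by
    intro s
    calc b s ≤ ∑ _z : V, (1:ℝ) := Finset.sum_le_sum fun z _ => stepM_pow_le_one A s z v
      _ = (Fintype.card V : ℝ) := by simp
  set f : ℕ → ℝ := fun s => α ^ s * b s with hf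
  set g : ℕ → ℝ := fun t => α ^ t with hg
  have hfsum : Summable fun s => ‖f s‖ := by
    apply Summable.of_nonneg_of_le (fun s => norm_nonneg _)
      (fun s => ?_) (Summable.mul_left (Fintype.card V : ℝ)
        (summable_geometric_of_lt_one hα0.le hα1))
    rw [Real.norm_eq_abs, abs_of_nonneg (mul_nonneg (by positivity) (hb0 s))]
    calc α ^ s * b s ≤ α ^ s * (Fintype.card V : ℝ) :=
          mul_le_mul_of_nonneg_left (hbn s) (by positivity)
      _ = (Fintype.card V : ℝ) * α ^ s := mul_comm _ _
  have hgsum : Summable fun t => ‖g t‖ := by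
    simp only [hg, Real.norm_eq_abs, abs_of_nonneg (le_of_lt (pow_pos hα0 _))]
    exact summable_geometric_of_lt_one hα0.le hα1
  -- main computation
  have key : (∑' τ : ℕ, α ^ τ * ∑ z, (stepM A' ^ τ) z v)
      = (1 / (1 - α)) * ∑' τ : ℕ, α ^ τ * b τ := by
    have h1 : ∀ τ : ℕ, α ^ τ * ∑ z, (stepM A' ^ τ) z v
        = ∑ k ∈ Finset.range (τ + 1), f k * g (τ - k) := by
      intro τ
      rw [hstep]
      have : ∑ z, ((M + E) ^ τ) z v = ∑ k ∈ Finset.range (τ + 1), b k := by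
        simp_rw [hcol]
        rw [Finset.sum_comm]
      rw [this, Finset.mul_sum]
      refine Finset.sum_congr rfl fun k hk => ?_
      rw [Finset.mem_range] at hk
      have : α ^ τ = α ^ k * α ^ (τ - k) := by
        rw [← pow_add]
        congr 1
        omega
      rw [this, hf, hg]
      ring
    calc (∑' τ : ℕ, α ^ τ * ∑ z, (stepM A' ^ τ) z v)
        = ∑' τ : ℕ, ∑ k ∈ Finset.range (τ + 1), f k * g (τ - k) := by
          exact tsum_congr h1
      _ = (∑' n, f n) * ∑' n, g n :=
          (tsum_mul_tsum_eq_tsum_sum_range_of_summable_norm hfsum hgsum).symm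
      _ = (∑' n, f n) * (1 / (1 - α)) := by
          rw [hg, tsum_geometric_of_lt_one hα0.le hα1, one_div]
      _ = (1 / (1 - α)) * ∑' τ : ℕ, α ^ τ * b τ := by rw [one_div, mul_comm]
  unfold pagerank
  rw [key]
  ring
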